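/- arXiv:2411.04795 — 3 statements merged into one kernel-verified Lean document; each statement's English description precedes it below -/
import Mathlib

section
/- Let f_1,...,f_m and g_1,...,g_n be positive functions of ε > 0 such that for every i ∈ {1,...,m} and j ∈ {1,...,n} the limit lim_{ε→0} f_i(ε)/g_j(ε) exists in [0,∞] (as an extended nonnegative real). Then the limit lim_{ε→0} (f_1(ε)+...+f_m(ε))/(g_1(ε)+...+g_n(ε)) also exists in [0,∞]. -/
open Filter Topology

/-- Lemma 1 (paper): if all pairwise ratio limits `f i / g j` exist in `[0,∞]`,
then the ratio of the sums has a limit in `[0,∞]` as `ε ↓ 0`. -/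
theorem stmt0 (m n : ℕ) (hm : 0 < m) (hn : 0 < n)
    (f : Fin m → ℝ → ℝ) (g : Fin n → ℝ → ℝ)
    (hf : ∀ i, ∀ ε > (0:ℝ), 0 < f i ε) (hg : ∀ j, ∀ ε > (0:ℝ), 0 < g j ε)
    (h : ∀ i j, ∃ L : ENNReal,
      Tendsto (fun ε => ENNReal.ofReal (f i ε / g j ε)) (𝓝[>] (0:ℝ)) (𝓝 L)) :
    ∃ L : ENNReal,
      Tendsto (fun ε => ENNReal.ofReal ((∑ i, f i ε) / (∑ j, g j ε)))
        (𝓝[>] (0:ℝ)) (𝓝 L) := by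
  choose L hL using h
  have hpos : ∀ᶠ ε in 𝓝[>] (0:ℝ), 0 < ε := self_mem_nhdsWithin
  -- per-i limit of f i / ∑ g
  have key : ∀ i, Tendsto
      (fun ε => ENNReal.ofReal (f i ε) / ENNReal.ofReal (∑ j, g j ε))
      (𝓝[>] (0:ℝ)) (𝓝 ((∑ j, (L i j)⁻¹)⁻¹)) := by
    intro i
    have hsum : Tendsto (fun ε => ∑ j, (ENNReal.ofReal (f i ε / g j ε))⁻¹)
        (𝓝[>] (0:ℝ)) (𝓝 (∑ j, (L i j)⁻¹)) :=
      tendsto_finset_sum _ (fun j _ => (hL i j).inv)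
    have hinv := hsum.inv
    refine hinv.congr' ?_
    filter_upwards [hpos] with ε hε
    have hfi : 0 < f i ε := hf i ε hε
    have hgj : ∀ j, 0 < g j ε := fun j => hg j ε hε
    have e1 : ∀ j : Fin n, (ENNReal.ofReal (f i ε / g j ε))⁻¹
        = ENNReal.ofReal (g j ε) / ENNReal.ofReal (f i ε) := by
      intro j
      rw [ENNReal.ofReal_div_of_pos (hgj j), ENNReal.inv_div]
      · exact Or.inl ENNReal.ofReal_ne_top
      · left
        simp [ENNReal.ofReal_eq_zero, not_le, hgj j]
    calc (∑ j, (ENNReal.ofReal (f i ε / g j ε))⁻¹)⁻¹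
        = (∑ j, ENNReal.ofReal (g j ε) / ENNReal.ofReal (f i ε))⁻¹ := by
          simp_rw [e1]
      _ = ((∑ j, ENNReal.ofReal (g j ε)) / ENNReal.ofReal (f i ε))⁻¹ := by
          simp_rw [div_eq_mul_inv, Finset.sum_mul]
      _ = ENNReal.ofReal (f i ε) / (∑ j, ENNReal.ofReal (g j ε)) := by
          rw [ENNReal.inv_div]
          · left; exact ENNReal.ofReal_ne_top
          · left
            simp [ENNReal.ofReal_eq_zero, not_le, hfi]
      _ = ENNReal.ofReal (f i ε) / ENNReal.ofReal (∑ j, g j ε) := by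
          rw [ENNReal.ofReal_sum_of_nonneg (fun j _ => (hgj j).le)]
  refine ⟨∑ i, (∑ j, (L i j)⁻¹)⁻¹, ?_⟩
  have hsumi : Tendsto
      (fun ε => ∑ i, ENNReal.ofReal (f i ε) / ENNReal.ofReal (∑ j, g j ε))
      (𝓝[>] (0:ℝ)) (𝓝 (∑ i, (∑ j, (L i j)⁻¹)⁻¹)) :=
    tendsto_finset_sum _ (fun i _ => key i)
  refine hsumi.congr' ?_
  filter_upwards [hpos] with ε hε
  have hgs : 0 < ∑ j, g j ε :=
    Finset.sum_pos (fun j _ => hg j ε hε) (by simpa using Finset.univ_nonempty_iff.mpr ⟨⟨0, hn⟩⟩)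
  calc (∑ i, ENNReal.ofReal (f i ε) / ENNReal.ofReal (∑ j, g j ε))
      = (∑ i, ENNReal.ofReal (f i ε)) / ENNReal.ofReal (∑ j, g j ε) := by
        simp_rw [div_eq_mul_inv, Finset.sum_mul]
    _ = ENNReal.ofReal (∑ i, f i ε) / ENNReal.ofReal (∑ j, g j ε) := by
        rw [ENNReal.ofReal_sum_of_nonneg (fun i _ => (hf i ε hε).le)]
    _ = ENNReal.ofReal ((∑ i, f i ε) / (∑ j, g j ε)) := by
        rw [ENNReal.ofReal_div_of_pos hgs]
end

section
/- Suppose P_{ij}(ε) > 0 for all ε > 0 and all i ≠ j in {1,...,M}, with Σ_{j≠i} P_{ij}(ε) = 1 for each i, and suppose that for every pair (i,j), (i,j') with i ≠ j, i ≠ j' the limit lim_{ε→0} P_{ij}(ε)/P_{ij'}(ε) exists in [0,∞]. Then for every i ≠ j the limit P_{ij}^0 = lim_{ε→0} P_{ij}(ε) exists in [0,1], and moreover Σ_{j≠i} P_{ij}^0 = 1 for each i. -/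
open Filter Topology

lemma key_limit (M : ℕ) (P : Fin M → Fin M → ℝ → ℝ)
    (hpos : ∀ i j, i ≠ j → ∀ ε > (0:ℝ), 0 < P i j ε)
    (hsum : ∀ i, ∀ ε > (0:ℝ), ∑ j ∈ Finset.univ.filter (fun j => j ≠ i), P i j ε = 1)
    (hreg : ∀ i j j', i ≠ j → i ≠ j' → ∃ L : ENNReal,
      Tendsto (fun ε => ENNReal.ofReal (P i j ε / P i j' ε)) (𝓝[>] (0:ℝ)) (𝓝 L))
    (i j : Fin M) (hij : i ≠ j) :
    ∃ c : ℝ, c ∈ Set.Icc (0:ℝ) 1 ∧ Tendsto (fun ε => P i j ε) (𝓝[>] (0:ℝ)) (𝓝 c) := by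
  set l : Filter ℝ := 𝓝[>] (0:ℝ)
  have hev : ∀ᶠ ε in l, (0:ℝ) < ε := self_mem_nhdsWithin
  set s : Finset (Fin M) := Finset.univ.filter (fun k => k ≠ i) with hs
  -- choose limits of ratios P i k / P i j
  choose L hL using fun (k : Fin M) (hk : i ≠ k) => hreg i k j hk hij
  -- the limit for k = j is 1
  have hLj : L j hij = 1 := by
    have h1 : Tendsto (fun ε => ENNReal.ofReal (P i j ε / P i j ε)) l (𝓝 1) := by
      have : Tendsto (fun _ : ℝ => (1 : ENNReal)) l (𝓝 1) := tendsto_const_nhds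
      refine this.congr' ?_
      filter_upwards [hev] with ε hε
      rw [div_self (hpos i j hij ε hε).ne', ENNReal.ofReal_one]
    exact tendsto_nhds_unique (hL j hij) h1
  -- total limit
  set Lt : ENNReal := ∑ k ∈ s, if hk : i ≠ k then L k hk else 0 with hLt
  have hjs : j ∈ s := by simp [hs, hij.symm]
  have hLt1 : 1 ≤ Lt := by
    rw [hLt]
    calc (1:ENNReal) = if hk : i ≠ j then L j hk else 0 := by rw [dif_pos hij, hLj]
    _ ≤ _ := Finset.single_le_sum
        (f := fun k => if hk : i ≠ k then L k hk else 0) (fun k _ => zero_le) hjs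
  -- sum of ratios tends to Lt
  have hsumt : Tendsto (fun ε => ∑ k ∈ s, ENNReal.ofReal (P i k ε / P i j ε)) l (𝓝 Lt) := by
    rw [hLt]
    refine tendsto_finset_sum _ (fun k hk => ?_)
    have hk' : i ≠ k := by
      simp only [hs, Finset.mem_filter] at hk
      exact hk.2.symm
    simpa [hk'] using hL k hk'
  -- this sum equals ofReal (P i j ε)⁻¹ eventually
  have hinv : Tendsto (fun ε => ENNReal.ofReal ((P i j ε)⁻¹)) l (𝓝 Lt) := by
    refine hsumt.congr' ?_
    filter_upwards [hev] with ε hε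
    have hsum' : ∑ k ∈ s, P i k ε / P i j ε = (P i j ε)⁻¹ := by
      rw [← Finset.sum_div, hsum i ε hε, one_div]
    rw [← hsum', ENNReal.ofReal_sum_of_nonneg]
    intro k hk
    have hk' : i ≠ k := by
      simp only [hs, Finset.mem_filter] at hk
      exact hk.2.symm
    exact div_nonneg (hpos i k hk' ε hε).le (hpos i j hij ε hε).le
  -- hence ofReal (P i j ε) tends to Lt⁻¹
  have hofR : Tendsto (fun ε => ENNReal.ofReal (P i j ε)) l (𝓝 Lt⁻¹) := by
    have := hinv.inv
    refine this.congr' ?_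
    filter_upwards [hev] with ε hε
    rw [ENNReal.ofReal_inv_of_pos (hpos i j hij ε hε), inv_inv]
  have hne : Lt⁻¹ ≠ ⊤ := by
    have h0 : Lt ≠ 0 := fun h => by simp [h] at hLt1
    simp [ENNReal.inv_ne_top, h0]
  refine ⟨Lt⁻¹.toReal, ⟨ENNReal.toReal_nonneg, ?_⟩, ?_⟩
  · have : Lt⁻¹ ≤ 1 := ENNReal.inv_le_one.mpr hLt1
    simpa using ENNReal.toReal_mono (by simp) this
  · have := (ENNReal.tendsto_toReal hne).comp hofR
    refine this.congr' ?_
    filter_upwards [hev] with ε hε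
    simp [Function.comp, ENNReal.toReal_ofReal (hpos i j hij ε hε).le]

/-- If the transition probabilities `P i j (ε)` are positive, sum to one over `j ≠ i`,
and all ratios `P i j / P i j'` have limits in `[0,∞]` as `ε ↓ 0`, then each
`P i j (ε)` converges to some `P⁰ i j ∈ [0,1]`, and `∑_{j ≠ i} P⁰ i j = 1`. -/
theorem stmt1 (M : ℕ) (hM : 2 ≤ M) (P : Fin M → Fin M → ℝ → ℝ)
    (hpos : ∀ i j, i ≠ j → ∀ ε > (0:ℝ), 0 < P i j ε)
    (hsum : ∀ i, ∀ ε > (0:ℝ), ∑ j ∈ Finset.univ.filter (fun j => j ≠ i), P i j ε = 1)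
    (hreg : ∀ i j j', i ≠ j → i ≠ j' → ∃ L : ENNReal,
      Tendsto (fun ε => ENNReal.ofReal (P i j ε / P i j' ε)) (𝓝[>] (0:ℝ)) (𝓝 L)) :
    ∃ P0 : Fin M → Fin M → ℝ,
      (∀ i j, i ≠ j → P0 i j ∈ Set.Icc (0:ℝ) 1 ∧
        Tendsto (fun ε => P i j ε) (𝓝[>] (0:ℝ)) (𝓝 (P0 i j))) ∧
      (∀ i, ∑ j ∈ Finset.univ.filter (fun j => j ≠ i), P0 i j = 1) := by
  have key := key_limit M P hpos hsum hreg
  classical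
  refine ⟨fun i j => if hij : i ≠ j then (key i j hij).choose else 0, ?_, ?_⟩
  · intro i j hij
    have h := (key i j hij).choose_spec
    simpa [hij] using h
  · intro i
    -- the sum of P i j ε tends to the sum of limits, but also equals 1 eventually
    have h1 : Tendsto (fun ε => ∑ j ∈ Finset.univ.filter (fun j => j ≠ i), P i j ε)
        (𝓝[>] (0:ℝ)) (𝓝 (∑ j ∈ Finset.univ.filter (fun j => j ≠ i),
          if hij : i ≠ j then (key i j hij).choose else 0)) := by
      refine tendsto_finset_sum _ (fun j hj => ?_)
      have hij : i ≠ j := by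
        simp only [Finset.mem_filter] at hj
        exact hj.2.symm
      simpa [hij] using (key i j hij).choose_spec.2
    have h2 : Tendsto (fun ε => ∑ j ∈ Finset.univ.filter (fun j => j ≠ i), P i j ε)
        (𝓝[>] (0:ℝ)) (𝓝 1) := by
      refine tendsto_const_nhds.congr' ?_
      filter_upwards [self_mem_nhdsWithin] with ε hε
      exact (hsum i ε hε).symm
    exact (tendsto_nhds_unique h1 h2)
end

section
/- Let X_n^ε be a Markov chain on {1,...,M'} ∪ F with transition probabilities P_{jk}^ε converging to P_{jk}^0, where E = {1,...,M'} is one ergodic class under P^0 with invariant measure λ and transitions from E to F vanish as ε ↓ 0. Let θ^ε be the first hitting time of F starting from E, and let G ⊆ F be nonempty. Then as ε ↓ 0, P(X_{θ^ε}^ε ∈ G) is asymptotically equivalent to ( Σ_{k∈G} Σ_{j∈E} λ(j)P_{jk}^ε ) / ( Σ_{k∈F} Σ_{j∈E} λ(j)P_{jk}^ε ), uniformly over the starting state in E. -/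
open Filter Topology Matrix Finset

section FWhelpers
variable {M : ℕ} (Q B : Matrix (Fin M) (Fin M) ℝ)

lemma pow_entry_nonneg' (hQ : ∀ a b, 0 ≤ Q a b) : ∀ n a b, 0 ≤ (Q ^ n) a b := by
  intro n
  induction n with
  | zero => intro a b; rw [pow_zero]; by_cases h : a = b <;> simp [Matrix.one_apply, h]
  | succ n ih =>
    intro a b
    rw [pow_succ, Matrix.mul_apply]
    exact Finset.sum_nonneg fun c _ => mul_nonneg (ih a c) (hQ c b)

lemma pow_rowsum_le' (hQ : ∀ a b, 0 ≤ Q a b) (hrow : ∀ a, ∑ b, Q a b ≤ 1) :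
    ∀ n a, ∑ b, (Q ^ n) a b ≤ 1 := by
  intro n
  induction n with
  | zero => intro a; simp [Matrix.one_apply]
  | succ n ih =>
    intro a
    have : ∑ b, (Q ^ (n+1)) a b = ∑ c, (Q ^ n) a c * (∑ b, Q c b) := by
      simp only [pow_succ, Matrix.mul_apply, Finset.mul_sum]
      exact Finset.sum_comm
    rw [this]
    calc ∑ c, (Q ^ n) a c * (∑ b, Q c b) ≤ ∑ c, (Q ^ n) a c * 1 :=
          Finset.sum_le_sum fun c _ => mul_le_mul_of_nonneg_left (hrow c)
            (pow_entry_nonneg' Q hQ n a c)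
      _ ≤ 1 := by simpa using ih a

lemma pow_entry_le_one' (hQ : ∀ a b, 0 ≤ Q a b) (hrow : ∀ a, ∑ b, Q a b ≤ 1) :
    ∀ n a b, (Q ^ n) a b ≤ 1 := by
  intro n a b
  calc (Q ^ n) a b ≤ ∑ c, (Q ^ n) a c :=
        Finset.single_le_sum (fun c _ => pow_entry_nonneg' Q hQ n a c) (Finset.mem_univ b)
    _ ≤ 1 := pow_rowsum_le' Q hQ hrow n a

lemma pow_entry_close' (hQ : ∀ a b, 0 ≤ Q a b) (hrow : ∀ a, ∑ b, Q a b ≤ 1)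
    (hB : ∀ a b, 0 ≤ B a b) (hBrow : ∀ a, ∑ b, B a b ≤ 1)
    {γ : ℝ} (hγ : 0 ≤ γ) (hd : ∀ a b, |Q a b - B a b| ≤ γ) :
    ∀ (n:ℕ) a b, |(Q ^ n) a b - (B ^ n) a b| ≤ (n:ℝ) * M * γ := by
  intro n
  induction n with
  | zero => intro a b; simp
  | succ n ih =>
    intro a b
    have key : (Q ^ (n+1)) a b - (B ^ (n+1)) a b
        = (∑ c, (Q a c - B a c) * (Q ^ n) c b) + ∑ c, B a c * ((Q ^ n) c b - (B ^ n) c b) := by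
      rw [pow_succ', pow_succ', Matrix.mul_apply, Matrix.mul_apply]
      rw [← Finset.sum_add_distrib, ← Finset.sum_sub_distrib]
      congr 1; ext c; ring
    rw [key]
    have h1 : |∑ c, (Q a c - B a c) * (Q ^ n) c b| ≤ M * γ := by
      calc |∑ c, (Q a c - B a c) * (Q ^ n) c b| ≤ ∑ c, |(Q a c - B a c) * (Q ^ n) c b| :=
            Finset.abs_sum_le_sum_abs _ _
        _ ≤ ∑ _c : Fin M, γ * 1 := by
            apply Finset.sum_le_sum
            intro c _
            rw [abs_mul]
            exact mul_le_mul (hd a c) (by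
              rw [abs_of_nonneg (pow_entry_nonneg' Q hQ n c b)]
              exact pow_entry_le_one' Q hQ hrow n c b) (abs_nonneg _) hγ
        _ = M * γ := by simp [mul_comm]
    have h2 : |∑ c, B a c * ((Q ^ n) c b - (B ^ n) c b)| ≤ n * M * γ := by
      calc |∑ c, B a c * ((Q ^ n) c b - (B ^ n) c b)|
          ≤ ∑ c, |B a c * ((Q ^ n) c b - (B ^ n) c b)| := Finset.abs_sum_le_sum_abs _ _
        _ ≤ ∑ c, B a c * (n * M * γ) := by
            apply Finset.sum_le_sum
            intro c _
            rw [abs_mul, abs_of_nonneg (hB a c)]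
            exact mul_le_mul_of_nonneg_left (ih c b) (hB a c)
        _ = (∑ c, B a c) * (n * M * γ) := by rw [← Finset.sum_mul]
        _ ≤ 1 * (n * M * γ) := by
            apply mul_le_mul_of_nonneg_right (hBrow a)
            positivity
        _ = n * M * γ := one_mul _
    calc |(∑ c, (Q a c - B a c) * (Q ^ n) c b) + ∑ c, B a c * ((Q ^ n) c b - (B ^ n) c b)|
        ≤ |∑ c, (Q a c - B a c) * (Q ^ n) c b| + |∑ c, B a c * ((Q ^ n) c b - (B ^ n) c b)| :=
          abs_add_le _ _
      _ ≤ M * γ + n * M * γ := add_le_add h1 h2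
      _ = (↑(n+1)) * M * γ := by push_cast; ring

-- telescoping:  ∑_{r<n} Q^r (v - Qv) = v - Q^n v  (componentwise)
lemma telescope' (v : Fin M → ℝ) :
    ∀ n a, ∑ r ∈ Finset.range n, ((Q ^ r) *ᵥ (v - Q *ᵥ v)) a = v a - ((Q ^ n) *ᵥ v) a := by
  intro n
  induction n with
  | zero => intro a; simp
  | succ n ih =>
    intro a
    rw [Finset.sum_range_succ, ih]
    have : ((Q ^ n) *ᵥ (v - Q *ᵥ v)) a = ((Q ^ n) *ᵥ v) a - ((Q ^ (n+1)) *ᵥ v) a := by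
      rw [Matrix.mulVec_sub, Pi.sub_apply, Matrix.mulVec_mulVec, ← pow_succ]
    rw [this]; ring

-- iterate: u = Qu + g  ⇒  u = Q^n u + (∑_{r<n} Q^r) g
lemma iterate_id' (u g : Fin M → ℝ) (hu : ∀ a, u a = (Q *ᵥ u) a + g a) :
    ∀ n a, u a = ((Q ^ n) *ᵥ u) a + ((∑ r ∈ Finset.range n, Q ^ r) *ᵥ g) a := by
  intro n
  induction n with
  | zero => intro a; simp
  | succ n ih =>
    intro a
    have hQu : ((Q ^ n) *ᵥ (Q *ᵥ u)) a = ((Q ^ (n+1)) *ᵥ u) a := by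
      rw [Matrix.mulVec_mulVec, ← pow_succ]
    have : ((Q ^ n) *ᵥ u) a = ((Q ^ (n+1)) *ᵥ u) a + ((Q ^ n) *ᵥ g) a := by
      have hfun : u = (Q *ᵥ u) + g := funext fun a => hu a
      conv_lhs => rw [hfun]
      rw [Matrix.mulVec_add, Pi.add_apply, hQu]
    rw [ih a, this, Finset.sum_range_succ, Matrix.add_mulVec, Pi.add_apply]
    ring

lemma mulVec_le_bnd' (hQ : ∀ a b, 0 ≤ Q a b) (hrow : ∀ a, ∑ b, Q a b ≤ 1)
    (v : Fin M → ℝ) {bnd : ℝ} (hb : 0 ≤ bnd) (hvb : ∀ c, v c ≤ bnd) :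
    ∀ a, (Q *ᵥ v) a ≤ bnd := by
  intro a
  calc (Q *ᵥ v) a = ∑ c, Q a c * v c := rfl
    _ ≤ ∑ c, Q a c * bnd := Finset.sum_le_sum fun c _ =>
        mul_le_mul_of_nonneg_left (hvb c) (hQ a c)
    _ = (∑ c, Q a c) * bnd := by rw [← Finset.sum_mul]
    _ ≤ 1 * bnd := mul_le_mul_of_nonneg_right (hrow a) hb
    _ = bnd := one_mul _



lemma sum_mulVec_apply' {M : ℕ} (s : Finset ℕ) (A : ℕ → Matrix (Fin M) (Fin M) ℝ) (v : Fin M → ℝ)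
    (a : Fin M) : ((∑ n ∈ s, A n) *ᵥ v) a = ∑ n ∈ s, ((A n) *ᵥ v) a := by
  simp only [Matrix.mulVec, dotProduct, Matrix.sum_apply, Finset.sum_mul]
  exact Finset.sum_comm

set_option maxHeartbeats 1000000 in
lemma core_est' {M M' : ℕ} (Q : Matrix (Fin M) (Fin M) ℝ) (lam u gvec fvec : Fin M → ℝ)
    (lmin c0 af ag γ : ℝ) (m : ℕ) (i : Fin M) (hi : (i:ℕ) < M')
    (hQnn : ∀ a b, 0 ≤ Q a b)
    (hQz : ∀ a b : Fin M, ¬((a:ℕ) < M' ∧ (b:ℕ) < M') → Q a b = 0)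
    (hQrow : ∀ a, ∑ b, Q a b ≤ 1)
    (hrowf : ∀ a : Fin M, (a:ℕ) < M' → (∑ b, Q a b) + fvec a = 1)
    (hfz : ∀ a : Fin M, M' ≤ (a:ℕ) → fvec a = 0)
    (hgnn : ∀ a, 0 ≤ gvec a) (hgf : ∀ a, gvec a ≤ fvec a)
    (hu : ∀ a, u a = (Q *ᵥ u) a + gvec a)
    (hu0 : ∀ a, 0 ≤ u a) (hu1 : ∀ a, u a ≤ 1)
    (hlmin : 0 < lmin)
    (hlam : ∀ a : Fin M, (a:ℕ) < M' → lmin ≤ lam a)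
    (hlamnn : ∀ a, 0 ≤ lam a)
    (hlamsum1 : ∑ a ∈ Finset.univ.filter (fun a : Fin M => (a:ℕ) < M'), lam a = 1)
    (hafdef : af = ∑ j ∈ Finset.univ.filter (fun a : Fin M => (a:ℕ) < M'), lam j * fvec j)
    (hagdef : ag = ∑ j ∈ Finset.univ.filter (fun a : Fin M => (a:ℕ) < M'), lam j * gvec j)
    (hγdef : γ = ∑ c ∈ Finset.univ.filter (fun a : Fin M => (a:ℕ) < M'),
      |(∑ b ∈ Finset.univ.filter (fun a : Fin M => (a:ℕ) < M'), lam b * Q b c) - lam c|)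
    (hag0 : 0 < ag)
    (hm : 1 ≤ m) (hc0 : 0 < c0)
    (hS : ∀ a b : Fin M, (a:ℕ) < M' → (b:ℕ) < M' →
      c0/2 ≤ (∑ n ∈ Finset.range m, Q ^ n) a b)
    (hγκ : γ * ((m:ℝ)^2 / ((((Finset.univ.filter (fun a : Fin M => (a:ℕ) < M')).card : ℝ)
      * (c0/2)) * lmin)) ≤ 1/2) :
    |u i * af / ag - 1| ≤
      4 * ((m:ℝ)^2 / ((((Finset.univ.filter (fun a : Fin M => (a:ℕ) < M')).card : ℝ)
        * (c0/2)) * lmin)) * (af + γ) := by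
  classical
  set E : Finset (Fin M) := Finset.univ.filter (fun a : Fin M => (a:ℕ) < M') with hE
  have hEmem : ∀ a : Fin M, a ∈ E ↔ (a:ℕ) < M' := fun a => by simp [hE]
  have hiE : i ∈ E := (hEmem i).2 hi
  have hEne : E.Nonempty := ⟨i, hiE⟩
  set θ : ℝ := ((E.card : ℝ)) * (c0/2) with hθdef
  have hθ : 0 < θ := by
    apply mul_pos _ (by linarith)
    exact_mod_cast Finset.card_pos.2 hEne
  set κ : ℝ := (m:ℝ)^2 / (θ * lmin) with hκdef
  have hm0 : (0:ℝ) < (m:ℝ) := by exact_mod_cast hm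
  have hκ0 : 0 < κ := by apply div_pos (by positivity) (by positivity)
  -- nonnegativity of fvec
  have hfnn : ∀ a, 0 ≤ fvec a := fun a => le_trans (hgnn a) (hgf a)
  have hafnn : 0 ≤ af := by
    rw [hafdef]; exact Finset.sum_nonneg fun j _ => mul_nonneg (hlamnn j) (hfnn j)
  have hγnn : 0 ≤ γ := by
    rw [hγdef]; exact Finset.sum_nonneg fun c _ => abs_nonneg _
  -- u vanishes off E
  have huz : ∀ a : Fin M, M' ≤ (a:ℕ) → u a = 0 := by
    intro a ha
    have h1 : (Q *ᵥ u) a = 0 := by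
      have : (Q *ᵥ u) a = ∑ b, Q a b * u b := rfl
      rw [this]
      apply Finset.sum_eq_zero; intro b _
      rw [hQz a b (fun h => absurd h.1 (not_lt.2 ha))]; ring
    have h2 : gvec a = 0 := le_antisymm (le_trans (hgf a) (le_of_eq (hfz a ha))) (hgnn a)
    rw [hu a, h1, h2]; ring
  -- bounds on fvec, gvec
  have hafl : 0 ≤ af / lmin := div_nonneg hafnn hlmin.le
  have hagl : 0 ≤ ag / lmin := div_nonneg hag0.le hlmin.le
  have hfb : ∀ a, fvec a ≤ af / lmin := by
    intro a
    by_cases ha : (a:ℕ) < M'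
    · rw [le_div_iff₀ hlmin]
      calc fvec a * lmin ≤ fvec a * lam a :=
            mul_le_mul_of_nonneg_left (hlam a ha) (hfnn a)
        _ = lam a * fvec a := mul_comm _ _
        _ ≤ af := by
            rw [hafdef]
            exact Finset.single_le_sum (fun j _ => mul_nonneg (hlamnn j) (hfnn j))
              ((hEmem a).2 ha)
    · rw [hfz a (not_lt.1 ha)]; exact hafl
  have hgb : ∀ a, gvec a ≤ ag / lmin := by
    intro a
    by_cases ha : (a:ℕ) < M'
    · rw [le_div_iff₀ hlmin]
      calc gvec a * lmin ≤ gvec a * lam a :=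
            mul_le_mul_of_nonneg_left (hlam a ha) (hgnn a)
        _ = lam a * gvec a := mul_comm _ _
        _ ≤ ag := by
            rw [hagdef]
            exact Finset.single_le_sum (fun j _ => mul_nonneg (hlamnn j) (hgnn j))
              ((hEmem a).2 ha)
    · have : gvec a = 0 := le_antisymm (le_trans (hgf a) (le_of_eq (hfz a (not_lt.1 ha)))) (hgnn a)
      rw [this]; exact hagl
  -- max and min of u on E
  obtain ⟨amax, hamaxE, hamax⟩ := Finset.exists_max_image E u hEne
  obtain ⟨amin, haminE, hamin⟩ := Finset.exists_min_image E u hEne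
  set Mx := u amax with hMx
  set mn := u amin with hmn
  have hmnMx : mn ≤ Mx := hamin amax hamaxE
  have hmn0 : 0 ≤ mn := hu0 amin
  have hMx0 : 0 ≤ Mx := le_trans hmn0 hmnMx
  -- weighted average c
  set c : ℝ := ∑ b ∈ E, lam b * u b with hcdef
  have hcMx : c ≤ Mx := by
    rw [hcdef]
    calc ∑ b ∈ E, lam b * u b ≤ ∑ b ∈ E, lam b * Mx :=
          Finset.sum_le_sum fun b hb => mul_le_mul_of_nonneg_left (hamax b hb) (hlamnn b)
      _ = Mx := by rw [← Finset.sum_mul, hlamsum1, one_mul]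
  have hmnc : mn ≤ c := by
    rw [hcdef]
    calc mn = (∑ b ∈ E, lam b) * mn := by rw [hlamsum1, one_mul]
      _ = ∑ b ∈ E, lam b * mn := by rw [Finset.sum_mul]
      _ ≤ ∑ b ∈ E, lam b * u b :=
          Finset.sum_le_sum fun b hb => mul_le_mul_of_nonneg_left (hamin b hb) (hlamnn b)
  have hc0' : 0 ≤ c := le_trans hmn0 hmnc
  -- the averaged matrix S
  set S : Matrix (Fin M) (Fin M) ℝ := ∑ n ∈ Finset.range m, Q ^ n with hSdef
  have hSnn : ∀ a b, 0 ≤ S a b := by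
    intro a b
    rw [hSdef, Matrix.sum_apply]
    exact Finset.sum_nonneg fun n _ => pow_entry_nonneg' Q hQnn n a b
  have hrowQz : ∀ a : Fin M, M' ≤ (a:ℕ) → ∑ b, Q a b = 0 := fun a ha =>
    Finset.sum_eq_zero fun b _ => hQz a b (fun h => absurd h.1 (not_lt.2 ha))
  set evec : Fin M → ℝ := fun a => if (a:ℕ) < M' then (1:ℝ) else 0 with hevec
  have hQe : ∀ a, (Q *ᵥ evec) a = ∑ b, Q a b := by
    intro a
    have h0 : (Q *ᵥ evec) a = ∑ b, Q a b * evec b := rfl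
    rw [h0]
    apply Finset.sum_congr rfl
    intro b _
    by_cases hb : (b:ℕ) < M'
    · simp [hevec, hb]
    · rw [hQz a b (fun h => hb h.2)]; ring
  have hfe : evec - Q *ᵥ evec = fvec := by
    funext a
    by_cases ha : (a:ℕ) < M'
    · have h1 := hrowf a ha
      simp only [Pi.sub_apply, hQe a]; simp only [hevec, if_pos ha]
      linarith
    · simp only [Pi.sub_apply, hQe a]; simp only [hevec, if_neg ha, hrowQz a (not_lt.1 ha),
        hfz a (not_lt.1 ha)]
      ring
  have hpartf : ∀ (n:ℕ) (a : Fin M),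
      ∑ r ∈ Finset.range n, ((Q^r) *ᵥ fvec) a = evec a - ((Q^n) *ᵥ evec) a := by
    intro n a; rw [← hfe]; exact telescope' Q evec n a
  have hfvb : ∀ (r:ℕ) (a : Fin M), ((Q^r) *ᵥ fvec) a ≤ af/lmin := fun r a =>
    mulVec_le_bnd' _ (pow_entry_nonneg' Q hQnn r) (pow_rowsum_le' Q hQnn hQrow r) _ hafl hfb a
  have hQne : ∀ (n:ℕ) (b : Fin M), ∑ c_ ∈ E, (Q^n) b c_ = ((Q^n) *ᵥ evec) b := by
    intro n b
    have h0 : ((Q^n) *ᵥ evec) b = ∑ c_, (Q^n) b c_ * evec c_ := rfl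
    rw [h0, hE, Finset.sum_filter]
    apply Finset.sum_congr rfl
    intro c_ _
    by_cases hc : (c_:ℕ) < M' <;> simp [hevec, hc]
  -- row sums of S over E
  have hsrow_le : ∀ a, ∑ b ∈ E, S a b ≤ (m:ℝ) := by
    intro a
    calc ∑ b ∈ E, S a b ≤ ∑ b, S a b :=
          Finset.sum_le_sum_of_subset_of_nonneg (Finset.filter_subset _ _)
            (fun b _ _ => hSnn a b)
      _ = ∑ n ∈ Finset.range m, ∑ b, (Q^n) a b := by
          simp only [hSdef, Matrix.sum_apply]
          exact Finset.sum_comm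
      _ ≤ ∑ _n ∈ Finset.range m, (1:ℝ) :=
          Finset.sum_le_sum fun n _ => pow_rowsum_le' Q hQnn hQrow n a
      _ = (m:ℝ) := by simp
  have hlowe : ∀ n ∈ Finset.range m, ∀ b : Fin M, (b:ℕ) < M' →
      (1:ℝ) - (m:ℝ) * (af/lmin) ≤ ((Q^n) *ᵥ evec) b := by
    intro n hn b hb
    have h1 : ∑ r ∈ Finset.range n, ((Q^r) *ᵥ fvec) b ≤ (n:ℝ) * (af/lmin) := by
      calc ∑ r ∈ Finset.range n, ((Q^r) *ᵥ fvec) b ≤ ∑ _r ∈ Finset.range n, (af/lmin) :=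
            Finset.sum_le_sum fun r _ => hfvb r b
        _ = (n:ℝ) * (af/lmin) := by simp [mul_comm]
    have h2 := hpartf n b
    have h3 : evec b = 1 := by simp [hevec, hb]
    have h4 : (n:ℝ) ≤ (m:ℝ) := by exact_mod_cast le_of_lt (Finset.mem_range.1 hn)
    have h5 : (n:ℝ) * (af/lmin) ≤ (m:ℝ) * (af/lmin) := mul_le_mul_of_nonneg_right h4 hafl
    rw [h3] at h2
    linarith
  have hsrow_ge : ∀ b : Fin M, (b:ℕ) < M' →
      (m:ℝ) - (m:ℝ)^2 * (af/lmin) ≤ ∑ c_ ∈ E, S b c_ := by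
    intro b hb
    have h1 : ∑ c_ ∈ E, S b c_ = ∑ n ∈ Finset.range m, ((Q^n) *ᵥ evec) b := by
      calc ∑ c_ ∈ E, S b c_ = ∑ c_ ∈ E, ∑ n ∈ Finset.range m, (Q^n) b c_ := by
            simp only [hSdef, Matrix.sum_apply]
        _ = ∑ n ∈ Finset.range m, ∑ c_ ∈ E, (Q^n) b c_ := Finset.sum_comm
        _ = ∑ n ∈ Finset.range m, ((Q^n) *ᵥ evec) b :=
            Finset.sum_congr rfl fun n _ => hQne n b
    rw [h1]
    calc (m:ℝ) - (m:ℝ)^2 * (af/lmin) = ∑ _n ∈ Finset.range m, ((1:ℝ) - (m:ℝ)*(af/lmin)) := by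
          rw [Finset.sum_const, Finset.card_range, nsmul_eq_mul]; ring
      _ ≤ ∑ n ∈ Finset.range m, ((Q^n) *ᵥ evec) b :=
          Finset.sum_le_sum fun n hn => hlowe n hn b hb
  -- Doeblin estimate
  have hiter := iterate_id' Q u gvec hu
  set R : Fin M → ℝ := fun a => ∑ n ∈ Finset.range m, ((∑ r ∈ Finset.range n, Q ^ r) *ᵥ gvec) a
    with hRdefn
  have hRdef : ∀ a : Fin M, (m:ℝ) * u a = (S *ᵥ u) a + R a := by
    intro a
    have h1 : ∑ _n ∈ Finset.range m, u a = (m:ℝ) * u a := by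
      rw [Finset.sum_const, Finset.card_range, nsmul_eq_mul]
    rw [← h1, hSdef, sum_mulVec_apply', hRdefn, ← Finset.sum_add_distrib]
    exact Finset.sum_congr rfl fun n _ => hiter n a
  have hgvb : ∀ (r:ℕ) (a : Fin M), ((Q^r) *ᵥ gvec) a ≤ ag/lmin := fun r a =>
    mulVec_le_bnd' _ (pow_entry_nonneg' Q hQnn r) (pow_rowsum_le' Q hQnn hQrow r) _ hagl hgb a
  have hgv0 : ∀ (r:ℕ) (a : Fin M), 0 ≤ ((Q^r) *ᵥ gvec) a := by
    intro r a
    have h0 : ((Q^r) *ᵥ gvec) a = ∑ b, (Q^r) a b * gvec b := rfl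
    rw [h0]
    exact Finset.sum_nonneg fun b _ => mul_nonneg (pow_entry_nonneg' Q hQnn r a b) (hgnn b)
  have hR_le : ∀ a, R a ≤ (m:ℝ)^2 * (ag/lmin) := by
    intro a
    have h1 : ∀ n ∈ Finset.range m, ((∑ r ∈ Finset.range n, Q ^ r) *ᵥ gvec) a ≤ (m:ℝ)*(ag/lmin) := by
      intro n hn
      rw [sum_mulVec_apply']
      calc ∑ r ∈ Finset.range n, ((Q^r) *ᵥ gvec) a ≤ ∑ _r ∈ Finset.range n, (ag/lmin) :=
            Finset.sum_le_sum fun r _ => hgvb r a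
        _ = (n:ℝ) * (ag/lmin) := by simp [mul_comm]
        _ ≤ (m:ℝ) * (ag/lmin) := by
            have h4 : (n:ℝ) ≤ (m:ℝ) := by exact_mod_cast le_of_lt (Finset.mem_range.1 hn)
            exact mul_le_mul_of_nonneg_right h4 hagl
    calc R a ≤ ∑ _n ∈ Finset.range m, (m:ℝ)*(ag/lmin) := Finset.sum_le_sum h1
      _ = (m:ℝ)^2 * (ag/lmin) := by rw [Finset.sum_const, Finset.card_range, nsmul_eq_mul]; ring
  have hR_nn : ∀ a, 0 ≤ R a := by
    intro a
    apply Finset.sum_nonneg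
    intro n _
    rw [sum_mulVec_apply']
    exact Finset.sum_nonneg fun r _ => hgv0 r a
  have hSuE : ∀ a, (S *ᵥ u) a = ∑ b ∈ E, S a b * u b := by
    intro a
    have h0 : (S *ᵥ u) a = ∑ b, S a b * u b := rfl
    rw [h0, ← Finset.sum_filter_add_sum_filter_not Finset.univ (fun b : Fin M => (b:ℕ) < M')]
    have h2 : ∑ b ∈ Finset.univ.filter (fun b : Fin M => ¬ (b:ℕ) < M'), S a b * u b = 0 :=
      Finset.sum_eq_zero fun b hb => by
        rw [huz b (not_lt.1 (Finset.mem_filter.1 hb).2)]; ring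
    rw [h2, add_zero]
  set W : ℝ := ∑ b ∈ E, u b with hW
  have hsplit : ∀ a, ∑ b ∈ E, S a b * u b
      = (∑ b ∈ E, (S a b - c0/2) * u b) + (c0/2) * W := by
    intro a
    rw [hW, Finset.mul_sum, ← Finset.sum_add_distrib]
    exact Finset.sum_congr rfl fun b _ => by ring
  have hsubsum : ∀ a, ∑ b ∈ E, (S a b - c0/2) = (∑ b ∈ E, S a b) - θ := by
    intro a
    rw [Finset.sum_sub_distrib, Finset.sum_const, nsmul_eq_mul, hθdef]
  have up1 : (S *ᵥ u) amax ≤ Mx * ((m:ℝ) - θ) + (c0/2) * W := by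
    rw [hSuE, hsplit]
    have h1 : ∑ b ∈ E, (S amax b - c0/2) * u b ≤ ∑ b ∈ E, (S amax b - c0/2) * Mx :=
      Finset.sum_le_sum fun b hb => mul_le_mul_of_nonneg_left (hamax b hb)
        (by have := hS amax b ((hEmem amax).1 hamaxE) ((hEmem b).1 hb); linarith)
    have h2 : ∑ b ∈ E, (S amax b - c0/2) * Mx = ((∑ b ∈ E, S amax b) - θ) * Mx := by
      rw [← Finset.sum_mul, hsubsum]
    have h3 : ((∑ b ∈ E, S amax b) - θ) * Mx ≤ ((m:ℝ) - θ) * Mx :=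
      mul_le_mul_of_nonneg_right (by have := hsrow_le amax; linarith) hMx0
    have h4 : ((m:ℝ) - θ) * Mx = Mx * ((m:ℝ) - θ) := mul_comm _ _
    linarith
  have lo1 : mn * ((m:ℝ) - (m:ℝ)^2 * (af/lmin) - θ) + (c0/2) * W ≤ (S *ᵥ u) amin := by
    rw [hSuE, hsplit]
    have h1 : ∑ b ∈ E, (S amin b - c0/2) * mn ≤ ∑ b ∈ E, (S amin b - c0/2) * u b :=
      Finset.sum_le_sum fun b hb => mul_le_mul_of_nonneg_left (hamin b hb)
        (by have := hS amin b ((hEmem amin).1 haminE) ((hEmem b).1 hb); linarith)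
    have h2 : ∑ b ∈ E, (S amin b - c0/2) * mn = ((∑ b ∈ E, S amin b) - θ) * mn := by
      rw [← Finset.sum_mul, hsubsum]
    have h3 : ((m:ℝ) - (m:ℝ)^2 * (af/lmin) - θ) * mn ≤ ((∑ b ∈ E, S amin b) - θ) * mn := by
      apply mul_le_mul_of_nonneg_right _ hmn0
      have := hsrow_ge amin ((hEmem amin).1 haminE)
      linarith
    have h4 : mn * ((m:ℝ) - (m:ℝ)^2 * (af/lmin) - θ)
        = ((m:ℝ) - (m:ℝ)^2 * (af/lmin) - θ) * mn := mul_comm _ _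
    linarith
  have hkey : θ * (Mx - mn) ≤ (m:ℝ)^2 * (af/lmin) * c + (m:ℝ)^2 * (ag/lmin) := by
    have e1 := hRdef amax
    have e2 := hRdef amin
    have h5 := hR_le amax
    have h6 := hR_nn amin
    have h7 : (m:ℝ)^2 * (af/lmin) * mn ≤ (m:ℝ)^2 * (af/lmin) * c :=
      mul_le_mul_of_nonneg_left hmnc (by positivity)
    nlinarith [up1, lo1, e1, e2, h5, h6, h7]
  have hosc : Mx - mn ≤ κ * (af * c + ag) := by
    rw [hκdef, div_mul_eq_mul_div, le_div_iff₀ (by positivity : (0:ℝ) < θ * lmin)]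
    have h1 := mul_le_mul_of_nonneg_right hkey hlmin.le
    have h2 : ((m:ℝ)^2 * (af/lmin) * c + (m:ℝ)^2 * (ag/lmin)) * lmin
        = (m:ℝ)^2 * (af * c + ag) := by
      field_simp
    rw [h2] at h1
    nlinarith [h1]
  -- the identity |c * af - ag| ≤ γ * osc
  have habsu : ∀ b ∈ E, |u b - c| ≤ Mx - mn := by
    intro b hb
    have h1 := hamax b hb
    have h2 := hamin b hb
    rw [abs_le]
    constructor <;> [skip; skip] <;> linarith
  have hid : |c * af - ag| ≤ γ * (Mx - mn) := by
    set q : Fin M → ℝ := fun c_ => ∑ b ∈ E, lam b * Q b c_ with hqdef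
    have hqz : ∀ c_ : Fin M, M' ≤ (c_:ℕ) → q c_ = 0 := by
      intro c_ hc
      apply Finset.sum_eq_zero
      intro b _
      rw [hQz b c_ (fun h => absurd h.2 (not_lt.2 hc))]; ring
    have step1 : c = (∑ c_ ∈ E, q c_ * u c_) + ag := by
      rw [hcdef]
      have hterm : ∀ b ∈ E, lam b * u b = lam b * (∑ c_, Q b c_ * u c_) + lam b * gvec b := by
        intro b _
        have h0 : (Q *ᵥ u) b = ∑ c_, Q b c_ * u c_ := rfl
        rw [← mul_add, ← h0, ← hu b]
      rw [Finset.sum_congr rfl hterm, Finset.sum_add_distrib]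
      congr 1
      · calc ∑ b ∈ E, lam b * (∑ c_, Q b c_ * u c_)
            = ∑ b ∈ E, ∑ c_, lam b * Q b c_ * u c_ := by
              apply Finset.sum_congr rfl
              intro b _
              rw [Finset.mul_sum]
              exact Finset.sum_congr rfl fun c_ _ => by ring
          _ = ∑ c_, ∑ b ∈ E, lam b * Q b c_ * u c_ := Finset.sum_comm
          _ = ∑ c_, q c_ * u c_ := by
              apply Finset.sum_congr rfl
              intro c_ _
              rw [hqdef, Finset.sum_mul]
          _ = ∑ c_ ∈ E, q c_ * u c_ := by
              rw [← Finset.sum_filter_add_sum_filter_not Finset.univ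
                (fun b : Fin M => (b:ℕ) < M') (fun c_ => q c_ * u c_)]
              have hz : ∑ c_ ∈ Finset.univ.filter (fun b : Fin M => ¬ (b:ℕ) < M'), q c_ * u c_ = 0 :=
                Finset.sum_eq_zero fun c_ hc => by
                  rw [hqz c_ (not_lt.1 (Finset.mem_filter.1 hc).2)]; ring
              rw [hz, add_zero]
      · exact hagdef.symm
    have hqsum : ∑ c_ ∈ E, q c_ = 1 - af := by
      have h1 : ∑ c_ ∈ E, q c_ = ∑ b ∈ E, lam b * (∑ c_ ∈ E, Q b c_) := by
        calc ∑ c_ ∈ E, q c_ = ∑ c_ ∈ E, ∑ b ∈ E, lam b * Q b c_ := rfl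
          _ = ∑ b ∈ E, ∑ c_ ∈ E, lam b * Q b c_ := Finset.sum_comm
          _ = ∑ b ∈ E, lam b * (∑ c_ ∈ E, Q b c_) :=
              Finset.sum_congr rfl fun b _ => (Finset.mul_sum _ _ _).symm
      have h2 : ∀ b ∈ E, ∑ c_ ∈ E, Q b c_ = 1 - fvec b := by
        intro b hb
        have hb' := (hEmem b).1 hb
        have h3 : ∑ c_ ∈ E, Q b c_ = ∑ c_, Q b c_ := by
          rw [← Finset.sum_filter_add_sum_filter_not Finset.univ
            (fun b : Fin M => (b:ℕ) < M') (fun c_ => Q b c_)]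
          have hz : ∑ c_ ∈ Finset.univ.filter (fun a : Fin M => ¬ (a:ℕ) < M'), Q b c_ = 0 :=
            Finset.sum_eq_zero fun c_ hc =>
              hQz b c_ (fun h => absurd h.2 (Finset.mem_filter.1 hc).2)
          rw [hz, add_zero]
        rw [h3]
        have := hrowf b hb'
        linarith
      have h2' : ∀ b ∈ E, lam b * (∑ c_ ∈ E, Q b c_) = lam b - lam b * fvec b := by
        intro b hb
        rw [h2 b hb]
        ring
      rw [h1, Finset.sum_congr rfl h2', Finset.sum_sub_distrib, hlamsum1, hafdef]
    have expand : c * af - ag = ∑ c_ ∈ E, (q c_ - lam c_) * (u c_ - c) := by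
      have e1 : ∑ c_ ∈ E, (q c_ - lam c_) * (u c_ - c)
          = (∑ c_ ∈ E, q c_ * u c_) - (∑ c_ ∈ E, q c_) * c
            - (∑ c_ ∈ E, lam c_ * u c_) + (∑ c_ ∈ E, lam c_) * c := by
        rw [Finset.sum_mul, Finset.sum_mul, ← Finset.sum_sub_distrib,
          ← Finset.sum_sub_distrib, ← Finset.sum_add_distrib]
        exact Finset.sum_congr rfl fun c_ _ => by ring
      rw [e1, hqsum, hlamsum1, ← hcdef]
      have e2 : ∑ c_ ∈ E, q c_ * u c_ = c - ag := by linarith [step1]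
      rw [e2]
      ring
    rw [expand]
    calc |∑ c_ ∈ E, (q c_ - lam c_) * (u c_ - c)|
        ≤ ∑ c_ ∈ E, |(q c_ - lam c_) * (u c_ - c)| := Finset.abs_sum_le_sum_abs _ _
      _ ≤ ∑ c_ ∈ E, |q c_ - lam c_| * (Mx - mn) := by
          apply Finset.sum_le_sum
          intro c_ hc
          rw [abs_mul]
          exact mul_le_mul_of_nonneg_left (habsu c_ hc) (abs_nonneg _)
      _ = γ * (Mx - mn) := by
          rw [← Finset.sum_mul, hγdef]
  -- c * af ≤ 3 * ag
  have hca : c * af ≤ 3 * ag := by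
    have h1 : γ * (Mx - mn) ≤ γ * (κ * (af * c + ag)) :=
      mul_le_mul_of_nonneg_left hosc hγnn
    have h2 : c * af - ag ≤ γ * κ * (af * c + ag) := by
      have := (abs_le.1 hid).2; nlinarith
    have h3 : γ * κ * (af * c + ag) ≤ (1/2) * (af * c + ag) := by
      apply mul_le_mul_of_nonneg_right hγκ
      positivity
    nlinarith
  -- final assembly
  have hui_c : |u i - c| ≤ Mx - mn := by
    rw [abs_le]
    have h1 := hamax i hiE
    have h2 := hamin i hiE
    constructor <;> [skip; skip] <;> linarith
  have hosc0 : 0 ≤ Mx - mn := by linarith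
  rw [div_sub' (ne_of_gt hag0), abs_div, abs_of_pos hag0, div_le_iff₀ hag0]
  have heq : u i * af - ag * 1 = (u i - c) * af + (c * af - ag) := by ring
  rw [heq]
  calc |(u i - c) * af + (c * af - ag)| ≤ |(u i - c) * af| + |c * af - ag| := abs_add_le _ _
    _ ≤ (Mx - mn) * af + γ * (Mx - mn) := by
        gcongr
        rw [abs_mul, abs_of_nonneg hafnn]
        exact mul_le_mul_of_nonneg_right hui_c hafnn
    _ ≤ 4 * κ * af * ag + 4 * κ * γ * ag := by
        have hc3 : af * c ≤ 3 * ag := by linarith [hca, mul_comm af c]; 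
        have step1 : (Mx - mn) * af ≤ 4 * κ * af * ag := by
          nlinarith [mul_le_mul_of_nonneg_right hosc hafnn,
            mul_le_mul_of_nonneg_left hc3 (mul_nonneg hκ0.le hafnn)]
        have step2 : γ * (Mx - mn) ≤ 4 * κ * γ * ag := by
          nlinarith [mul_le_mul_of_nonneg_left hosc hγnn,
            mul_le_mul_of_nonneg_left hc3 (mul_nonneg hγnn hκ0.le)]
        linarith
    _ = 4 * κ * (af + γ) * ag := by ring

end FWhelpers

set_option maxHeartbeats 2000000 in
/-- Exit-distribution lemma. `E = {j : j < M'}` is one ergodic class under the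
limiting matrix `P⁰` with invariant probability `lam`, exit probabilities to
`F = {k : M' ≤ k}` vanish as `ε ↓ 0`, and the family is asymptotically regular.
Then the probability that the chain, started at `i ∈ E`, first exits `E` into
`G ⊆ F` (expressed through the restricted matrix `Q ε` and the exit vector) is
asymptotically `(∑_{k∈G} ∑_{j∈E} lam j P_{jk}^ε)/(∑_{k∈F} ∑_{j∈E} lam j P_{jk}^ε)`. -/
theorem stmt13 (M M' : ℕ) (hM' : 0 < M') (hMM : M' < M)
    (Pe : Fin M → Fin M → ℝ → ℝ) (P0 : Fin M → Fin M → ℝ) (lam : Fin M → ℝ)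
    (G : Finset (Fin M)) (hGne : G.Nonempty) (hGF : ∀ k ∈ G, M' ≤ (k:ℕ))
    (hPnn : ∀ a b, ∀ ε > (0:ℝ), 0 ≤ Pe a b ε)
    (hProw : ∀ a : Fin M, ∀ ε > (0:ℝ), ∑ b, Pe a b ε = 1)
    -- each `Pe a b` is identically zero or positive for all `ε > 0`
    (halt : ∀ a b : Fin M, (∀ ε > (0:ℝ), Pe a b ε = 0) ∨ (∀ ε > (0:ℝ), 0 < Pe a b ε))
    -- asymptotic regularity of the ratios
    (hreg : ∀ a b c d : Fin M, (∀ ε > (0:ℝ), 0 < Pe c d ε) →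
      ∃ L : ENNReal, Tendsto (fun ε => ENNReal.ofReal (Pe a b ε / Pe c d ε))
        (𝓝[>] (0:ℝ)) (𝓝 L))
    (hlim : ∀ a b, Tendsto (fun ε => Pe a b ε) (𝓝[>] (0:ℝ)) (𝓝 (P0 a b)))
    -- `E` is one ergodic class under `P⁰`, with invariant probability `lam` on `E`
    (hrow0 : ∀ a : Fin M, (a:ℕ) < M' →
      ∑ b ∈ Finset.univ.filter (fun b : Fin M => (b:ℕ) < M'), P0 a b = 1)
    (hirr : ∀ a b : Fin M, (a:ℕ) < M' → (b:ℕ) < M' → ∃ n : ℕ,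
      0 < ((Matrix.of fun c d : Fin M =>
        if (c:ℕ) < M' ∧ (d:ℕ) < M' then P0 c d else 0) ^ n) a b)
    (hlamnn : ∀ a, 0 ≤ lam a) (hlamE : ∀ a : Fin M, M' ≤ (a:ℕ) → lam a = 0)
    (hlamsum : ∑ a, lam a = 1)
    (hlaminv : ∀ b : Fin M, (b:ℕ) < M' →
      ∑ a ∈ Finset.univ.filter (fun a : Fin M => (a:ℕ) < M'), lam a * P0 a b = lam b)
    -- exit probabilities vanish
    (hexit : ∀ a : Fin M, (a:ℕ) < M' →
      Tendsto (fun ε => ∑ k ∈ Finset.univ.filter (fun k : Fin M => M' ≤ (k:ℕ)),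
        Pe a k ε) (𝓝[>] (0:ℝ)) (𝓝 0))
    -- the exit rate into `G` is positive for each `ε`
    (hGpos : ∀ ε > (0:ℝ),
      0 < ∑ k ∈ G, ∑ j ∈ Finset.univ.filter (fun j : Fin M => (j:ℕ) < M'),
        lam j * Pe j k ε) :
    ∀ i : Fin M, (i:ℕ) < M' →
      Tendsto (fun ε =>
        (∑' n : ℕ,
          (((Matrix.of fun a b : Fin M =>
              if (a:ℕ) < M' ∧ (b:ℕ) < M' then Pe a b ε else 0) ^ n) *ᵥ
            (fun a : Fin M => if (a:ℕ) < M' then ∑ k ∈ G, Pe a k ε else 0)) i) /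
        ((∑ k ∈ G, ∑ j ∈ Finset.univ.filter (fun j : Fin M => (j:ℕ) < M'),
            lam j * Pe j k ε) /
          (∑ k ∈ Finset.univ.filter (fun k : Fin M => M' ≤ (k:ℕ)),
            ∑ j ∈ Finset.univ.filter (fun j : Fin M => (j:ℕ) < M'),
              lam j * Pe j k ε)))
        (𝓝[>] (0:ℝ)) (𝓝 1) := by
  classical
  intro i hi
  have hM0 : 0 < M := lt_trans hM' hMM
  -- the limit matrix restricted to E
  set B : Matrix (Fin M) (Fin M) ℝ :=
    Matrix.of (fun c d : Fin M => if (c:ℕ) < M' ∧ (d:ℕ) < M' then P0 c d else 0) with hBdef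
  set E : Finset (Fin M) := Finset.univ.filter (fun a : Fin M => (a:ℕ) < M') with hE
  set Fs : Finset (Fin M) := Finset.univ.filter (fun k : Fin M => M' ≤ (k:ℕ)) with hFs
  have hEmem : ∀ a : Fin M, a ∈ E ↔ (a:ℕ) < M' := fun a => by
    rw [hE]; simp
  have hFsmem : ∀ a : Fin M, a ∈ Fs ↔ M' ≤ (a:ℕ) := fun a => by
    rw [hFs]; simp
  have hiE : i ∈ E := (hEmem i).2 hi
  have hEne : E.Nonempty := ⟨i, hiE⟩
  have hGsub : G ⊆ Fs := fun k hk => (hFsmem k).2 (hGF k hk)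
  -- nonnegativity of P0 and B
  have hP0nn : ∀ a b, 0 ≤ P0 a b := fun a b =>
    ge_of_tendsto (hlim a b) (eventually_nhdsWithin_of_forall fun ε hε => hPnn a b ε hε)
  have hBnn : ∀ a b, 0 ≤ B a b := by
    intro a b
    rw [hBdef]
    by_cases h : (a:ℕ) < M' ∧ (b:ℕ) < M' <;> simp [Matrix.of_apply, h, hP0nn a b]
  have hBrow : ∀ a, ∑ b, B a b ≤ 1 := by
    intro a
    by_cases ha : (a:ℕ) < M'
    · have h1 : ∑ b, B a b = ∑ b ∈ E, P0 a b := by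
        rw [hE, Finset.sum_filter]
        apply Finset.sum_congr rfl
        intro b _
        by_cases hb : (b:ℕ) < M' <;> simp [hBdef, Matrix.of_apply, ha, hb]
      rw [h1, hrow0 a ha]
    · have h1 : ∑ b, B a b = 0 := Finset.sum_eq_zero fun b _ => by
        simp [hBdef, Matrix.of_apply, ha]
      rw [h1]; norm_num
  -- invariance of lam under B
  have hinv1 : ∀ b, ∑ a, lam a * B a b = lam b := by
    intro b
    have hsplit := Finset.sum_filter_add_sum_filter_not Finset.univ
      (fun a : Fin M => (a:ℕ) < M') (fun a => lam a * B a b)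
    have h2 : ∑ a ∈ Finset.univ.filter (fun a : Fin M => ¬ (a:ℕ) < M'), lam a * B a b = 0 :=
      Finset.sum_eq_zero fun a ha => by
        rw [hlamE a (not_lt.1 (Finset.mem_filter.1 ha).2)]; ring
    by_cases hb : (b:ℕ) < M'
    · have h1 : ∑ a ∈ E, lam a * B a b = ∑ a ∈ E, lam a * P0 a b := by
        apply Finset.sum_congr rfl
        intro a ha
        rw [hBdef]
        simp [Matrix.of_apply, (hEmem a).1 ha, hb]
      rw [← hsplit, h2, add_zero, ← hE, h1, hE, hlaminv b hb]
    · have h1 : ∑ a ∈ E, lam a * B a b = 0 := Finset.sum_eq_zero fun a ha => by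
        rw [hBdef]; simp [Matrix.of_apply, hb]
      rw [← hsplit, h2, add_zero, ← hE, h1, hlamE b (not_lt.1 hb)]
  have hinvn : ∀ (n:ℕ) b, ∑ a, lam a * (B^n) a b = lam b := by
    intro n
    induction n with
    | zero =>
      intro b
      simp [Matrix.one_apply, mul_ite, mul_one, mul_zero]
    | succ n ih =>
      intro b
      have h1 : ∑ a, lam a * (B^(n+1)) a b = ∑ c, (∑ a, lam a * (B^n) a c) * B c b := by
        simp only [pow_succ, Matrix.mul_apply, Finset.mul_sum, Finset.sum_mul]
        rw [Finset.sum_comm]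
        apply Finset.sum_congr rfl
        intro c _
        apply Finset.sum_congr rfl
        intro a _
        ring
      rw [h1]
      calc ∑ c, (∑ a, lam a * (B^n) a c) * B c b = ∑ c, lam c * B c b :=
            Finset.sum_congr rfl fun c _ => by rw [ih c]
        _ = lam b := hinv1 b
  -- positivity of lam on E
  have hlamEpos : ∀ b : Fin M, (b:ℕ) < M' → 0 < lam b := by
    intro b hb
    have hex : ∃ a0 : Fin M, 0 < lam a0 := by
      by_contra h
      push_neg at h
      have hz : ∀ a : Fin M, lam a = 0 := fun a => le_antisymm (h a) (hlamnn a)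
      rw [Finset.sum_congr rfl (fun a _ => hz a)] at hlamsum
      simp at hlamsum
    obtain ⟨a0, ha0⟩ := hex
    have ha0E : (a0:ℕ) < M' := by
      by_contra h
      rw [hlamE a0 (not_lt.1 h)] at ha0
      exact lt_irrefl _ ha0
    obtain ⟨n, hn⟩ := hirr a0 b ha0E hb
    have h1 : lam a0 * (B^n) a0 b ≤ ∑ a, lam a * (B^n) a b :=
      Finset.single_le_sum
        (fun a _ => mul_nonneg (hlamnn a) (pow_entry_nonneg' B hBnn n a b))
        (Finset.mem_univ a0)
    rw [hinvn n b] at h1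
    exact lt_of_lt_of_le (mul_pos ha0 hn) h1
  -- lmin
  set lmin : ℝ := E.inf' hEne lam with hlmindef
  have hlmin : 0 < lmin :=
    (Finset.lt_inf'_iff hEne).2 fun a haE => hlamEpos a ((hEmem a).1 haE)
  have hlmin_le : ∀ a : Fin M, (a:ℕ) < M' → lmin ≤ lam a := fun a ha =>
    Finset.inf'_le _ ((hEmem a).2 ha)
  have hlamsum1 : ∑ a ∈ E, lam a = 1 := by
    have hsplit := Finset.sum_filter_add_sum_filter_not Finset.univ
      (fun a : Fin M => (a:ℕ) < M') lam
    have h2 : ∑ a ∈ Finset.univ.filter (fun a : Fin M => ¬ (a:ℕ) < M'), lam a = 0 :=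
      Finset.sum_eq_zero fun a ha => hlamE a (not_lt.1 (Finset.mem_filter.1 ha).2)
    rw [h2, add_zero, hlamsum] at hsplit
    rw [← hE] at hsplit
    exact hsplit
  -- choose m via irreducibility
  have hNex : ∀ a b : Fin M, ∃ n:ℕ, ((a:ℕ) < M' → (b:ℕ) < M' → 0 < (B^n) a b) := by
    intro a b
    by_cases h : (a:ℕ) < M' ∧ (b:ℕ) < M'
    · obtain ⟨n, hn⟩ := hirr a b h.1 h.2
      exact ⟨n, fun _ _ => hn⟩
    · exact ⟨0, fun h1 h2 => absurd ⟨h1, h2⟩ h⟩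
  choose NN hNN using hNex
  set m : ℕ := 1 + Finset.univ.sup (fun a : Fin M => Finset.univ.sup (NN a)) with hmdef
  have hm : 1 ≤ m := Nat.le_add_right 1 _
  have hNNlt : ∀ a b : Fin M, NN a b < m := by
    intro a b
    have h1 : NN a b ≤ Finset.univ.sup (NN a) := Finset.le_sup (Finset.mem_univ b)
    have h2 : Finset.univ.sup (NN a) ≤
        Finset.univ.sup (fun a : Fin M => Finset.univ.sup (NN a)) :=
      Finset.le_sup (f := fun a : Fin M => Finset.univ.sup (NN a)) (Finset.mem_univ a)
    omega
  set S0 : Matrix (Fin M) (Fin M) ℝ := ∑ n ∈ Finset.range m, B ^ n with hS0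
  have hS0pos : ∀ a b : Fin M, (a:ℕ) < M' → (b:ℕ) < M' → 0 < S0 a b := by
    intro a b ha hb
    rw [hS0, Matrix.sum_apply]
    apply Finset.sum_pos' (fun n _ => pow_entry_nonneg' B hBnn n a b)
    exact ⟨NN a b, Finset.mem_range.2 (hNNlt a b), hNN a b ha hb⟩
  set c0 : ℝ := (E ×ˢ E).inf' (hEne.product hEne) (fun p => S0 p.1 p.2) with hc0def
  have hc0 : 0 < c0 := (Finset.lt_inf'_iff _).2 fun p hp => by
    obtain ⟨h1, h2⟩ := Finset.mem_product.1 hp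
    exact hS0pos p.1 p.2 ((hEmem _).1 h1) ((hEmem _).1 h2)
  have hc0le : ∀ a b : Fin M, (a:ℕ) < M' → (b:ℕ) < M' → c0 ≤ S0 a b := fun a b ha hb =>
    Finset.inf'_le (b := (a, b)) _
      (Finset.mem_product.2 ⟨(hEmem a).2 ha, (hEmem b).2 hb⟩)
  -- constants
  set κ : ℝ := (m:ℝ)^2 / (((E.card : ℝ) * (c0/2)) * lmin) with hκdef
  have hcard : (0:ℝ) < (E.card : ℝ) := by exact_mod_cast Finset.card_pos.2 hEne
  have hm0 : (0:ℝ) < (m:ℝ) := by exact_mod_cast hm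
  have hκ0 : 0 < κ := by
    rw [hκdef]; positivity
  set K : ℝ := 4 * κ with hKdef
  -- functions of ε
  set AG : ℝ → ℝ := fun ε => ∑ k ∈ G, ∑ j ∈ E, lam j * Pe j k ε with hAGdef
  set AF : ℝ → ℝ := fun ε => ∑ k ∈ Fs, ∑ j ∈ E, lam j * Pe j k ε with hAFdef
  set γv : ℝ → ℝ := fun ε => ∑ cc ∈ E, |(∑ b ∈ E, lam b * Pe b cc ε) - lam cc| with hγvdef
  -- tendsto facts
  have hAFtend : Tendsto AF (𝓝[>] (0:ℝ)) (𝓝 0) := by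
    have heq : AF = fun ε => ∑ j ∈ E, lam j * ∑ k ∈ Fs, Pe j k ε := by
      funext ε
      show ∑ k ∈ Fs, ∑ j ∈ E, lam j * Pe j k ε = _
      rw [Finset.sum_comm]
      exact Finset.sum_congr rfl fun j _ => (Finset.mul_sum _ _ _).symm
    rw [heq]
    have h1 : Tendsto (fun ε => ∑ j ∈ E, lam j * ∑ k ∈ Fs, Pe j k ε) (𝓝[>] (0:ℝ))
        (𝓝 (∑ j ∈ E, lam j * 0)) := by
      apply tendsto_finset_sum
      intro j hj
      exact (hexit j ((hEmem j).1 hj)).const_mul (lam j)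
    simpa using h1
  have hγtend : Tendsto γv (𝓝[>] (0:ℝ)) (𝓝 0) := by
    have h1 : Tendsto (fun ε => ∑ cc ∈ E, |(∑ b ∈ E, lam b * Pe b cc ε) - lam cc|)
        (𝓝[>] (0:ℝ)) (𝓝 (∑ cc ∈ E, |(∑ b ∈ E, lam b * P0 b cc) - lam cc|)) := by
      apply tendsto_finset_sum
      intro cc hcc
      apply Tendsto.abs
      apply Tendsto.sub_const
      apply tendsto_finset_sum
      intro b _
      exact (hlim b cc).const_mul (lam b)
    have h2 : ∑ cc ∈ E, |(∑ b ∈ E, lam b * P0 b cc) - lam cc| = 0 := by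
      apply Finset.sum_eq_zero
      intro cc hcc
      rw [hlaminv cc ((hEmem cc).1 hcc)]
      simp
    rw [h2] at h1
    exact h1
  -- eventual closeness of Pe to P0
  set γ₀ : ℝ := c0 / (2 * (m:ℝ)^2 * M) with hγ₀def
  have hγ₀pos : 0 < γ₀ := by
    rw [hγ₀def]
    apply div_pos hc0
    positivity
  have hclose : ∀ᶠ ε in 𝓝[>] (0:ℝ), ∀ a b : Fin M, |Pe a b ε - P0 a b| ≤ γ₀ := by
    refine Filter.eventually_all.2 fun a => Filter.eventually_all.2 fun b => ?_
    have h1 := Metric.tendsto_nhds.1 (hlim a b) γ₀ hγ₀pos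
    filter_upwards [h1] with ε hd
    rw [Real.dist_eq] at hd
    exact le_of_lt hd
  have hγsmall : ∀ᶠ ε in 𝓝[>] (0:ℝ), γv ε * κ ≤ 1/2 := by
    have h2 : Tendsto (fun ε => γv ε * κ) (𝓝[>] (0:ℝ)) (𝓝 0) := by
      simpa using hγtend.mul_const κ
    have h3 := h2.eventually_lt_const (by norm_num : (0:ℝ) < 1/2)
    filter_upwards [h3] with ε h
    exact le_of_lt h
  -- the main eventual bound
  have main : ∀ᶠ ε in 𝓝[>] (0:ℝ),
      |(∑' n : ℕ,
          (((Matrix.of fun a b : Fin M =>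
              if (a:ℕ) < M' ∧ (b:ℕ) < M' then Pe a b ε else 0) ^ n) *ᵥ
            (fun a : Fin M => if (a:ℕ) < M' then ∑ k ∈ G, Pe a k ε else 0)) i) /
        (AG ε / AF ε) - 1| ≤ K * (AF ε + γv ε) := by
    filter_upwards [self_mem_nhdsWithin, hclose, hγsmall] with ε hεm hcl hγs
    have hε0 : (0:ℝ) < ε := hεm
    have hPnn' : ∀ a b, 0 ≤ Pe a b ε := fun a b => hPnn a b ε hε0
    set Q : Matrix (Fin M) (Fin M) ℝ :=
      Matrix.of (fun a b : Fin M => if (a:ℕ) < M' ∧ (b:ℕ) < M' then Pe a b ε else 0) with hQd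
    set gvec : Fin M → ℝ := fun a => if (a:ℕ) < M' then ∑ k ∈ G, Pe a k ε else 0 with hgd
    set fvec : Fin M → ℝ := fun a => if (a:ℕ) < M' then ∑ k ∈ Fs, Pe a k ε else 0 with hfd
    have hQnn : ∀ a b, 0 ≤ Q a b := by
      intro a b
      rw [hQd]
      by_cases h : (a:ℕ) < M' ∧ (b:ℕ) < M' <;> simp [Matrix.of_apply, h, hPnn' a b]
    have hQz : ∀ a b : Fin M, ¬((a:ℕ) < M' ∧ (b:ℕ) < M') → Q a b = 0 := by
      intro a b h
      rw [hQd]; simp [Matrix.of_apply, h]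
    have hQB : ∀ a b, |Q a b - B a b| ≤ γ₀ := by
      intro a b
      rw [hQd, hBdef]
      by_cases h : (a:ℕ) < M' ∧ (b:ℕ) < M'
      · simp only [Matrix.of_apply, if_pos h]
        exact hcl a b
      · simp only [Matrix.of_apply, if_neg h]
        simpa using hγ₀pos.le
    have hfnn : ∀ a, 0 ≤ fvec a := by
      intro a
      rw [hfd]
      dsimp only
      by_cases ha : (a:ℕ) < M'
      · rw [if_pos ha]
        exact Finset.sum_nonneg fun k _ => hPnn' a k
      · rw [if_neg ha]
    have hgnn : ∀ a, 0 ≤ gvec a := by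
      intro a
      rw [hgd]
      dsimp only
      by_cases ha : (a:ℕ) < M'
      · rw [if_pos ha]
        exact Finset.sum_nonneg fun k _ => hPnn' a k
      · rw [if_neg ha]
    have hgf : ∀ a, gvec a ≤ fvec a := by
      intro a
      rw [hgd, hfd]
      dsimp only
      by_cases ha : (a:ℕ) < M'
      · rw [if_pos ha, if_pos ha]
        exact Finset.sum_le_sum_of_subset_of_nonneg hGsub (fun k _ _ => hPnn' a k)
      · rw [if_neg ha, if_neg ha]
    have hfz : ∀ a : Fin M, M' ≤ (a:ℕ) → fvec a = 0 := by
      intro a ha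
      rw [hfd]
      dsimp only
      rw [if_neg (not_lt.2 ha)]
    have hrowf : ∀ a : Fin M, (a:ℕ) < M' → (∑ b, Q a b) + fvec a = 1 := by
      intro a ha
      have h1 : ∑ b, Q a b = ∑ b ∈ E, Pe a b ε := by
        rw [hE, Finset.sum_filter]
        apply Finset.sum_congr rfl
        intro b _
        rw [hQd]
        by_cases hb : (b:ℕ) < M' <;> simp [Matrix.of_apply, ha, hb]
      have h2 : fvec a = ∑ k ∈ Fs, Pe a k ε := by
        rw [hfd]; dsimp only; rw [if_pos ha]
      have h3 := Finset.sum_filter_add_sum_filter_not Finset.univ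
        (fun b : Fin M => (b:ℕ) < M') (fun b => Pe a b ε)
      have h4 : Finset.univ.filter (fun b : Fin M => ¬ (b:ℕ) < M')
          = Finset.univ.filter (fun b : Fin M => M' ≤ (b:ℕ)) := by
        apply Finset.filter_congr
        intro b _
        simp [not_lt]
      rw [h4] at h3
      rw [h1, h2, hE, hFs, h3]
      exact hProw a ε hε0
    have hQrow : ∀ a, ∑ b, Q a b ≤ 1 := by
      intro a
      by_cases ha : (a:ℕ) < M'
      · have h1 := hrowf a ha
        have h2 := hfnn a
        linarith
      · have h1 : ∑ b, Q a b = 0 := Finset.sum_eq_zero fun b _ => hQz a b (fun h => ha h.1)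
        rw [h1]; norm_num
    -- the indicator vector of E and telescoping
    set evec : Fin M → ℝ := fun a => if (a:ℕ) < M' then (1:ℝ) else 0 with hevec
    have hrowQz : ∀ a : Fin M, M' ≤ (a:ℕ) → ∑ b, Q a b = 0 := fun a ha =>
      Finset.sum_eq_zero fun b _ => hQz a b (fun h => absurd h.1 (not_lt.2 ha))
    have hQe : ∀ a, (Q *ᵥ evec) a = ∑ b, Q a b := by
      intro a
      have h0 : (Q *ᵥ evec) a = ∑ b, Q a b * evec b := rfl
      rw [h0]
      apply Finset.sum_congr rfl
      intro b _
      by_cases hb : (b:ℕ) < M'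
      · simp [hevec, hb]
      · rw [hQz a b (fun h => hb h.2)]; ring
    have hfe : evec - Q *ᵥ evec = fvec := by
      funext a
      by_cases ha : (a:ℕ) < M'
      · have h1 := hrowf a ha
        simp only [Pi.sub_apply, hQe a]; simp only [hevec, if_pos ha]
        linarith
      · simp only [Pi.sub_apply, hQe a]; simp only [hevec, if_neg ha, hrowQz a (not_lt.1 ha),
          hfz a (not_lt.1 ha)]
        ring
    have hpartf : ∀ (n:ℕ) (a : Fin M),
        ∑ r ∈ Finset.range n, ((Q^r) *ᵥ fvec) a = evec a - ((Q^n) *ᵥ evec) a := by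
      intro n a
      rw [← hfe]
      exact telescope' Q evec n a
    -- summability of the series defining u
    have hvnn : ∀ (n:ℕ) (a : Fin M), 0 ≤ ((Q^n) *ᵥ gvec) a := by
      intro n a
      have h0 : ((Q^n) *ᵥ gvec) a = ∑ b, (Q^n) a b * gvec b := rfl
      rw [h0]
      exact Finset.sum_nonneg fun b _ =>
        mul_nonneg (pow_entry_nonneg' Q hQnn n a b) (hgnn b)
    have hpart : ∀ (N:ℕ) (a : Fin M), ∑ n ∈ Finset.range N, ((Q^n) *ᵥ gvec) a ≤ 1 := by
      intro N a
      have h1 : ∀ n : ℕ, ((Q^n) *ᵥ gvec) a ≤ ((Q^n) *ᵥ fvec) a := by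
        intro n
        have h0 : ((Q^n) *ᵥ gvec) a = ∑ b, (Q^n) a b * gvec b := rfl
        have h0' : ((Q^n) *ᵥ fvec) a = ∑ b, (Q^n) a b * fvec b := rfl
        rw [h0, h0']
        exact Finset.sum_le_sum fun b _ =>
          mul_le_mul_of_nonneg_left (hgf b) (pow_entry_nonneg' Q hQnn n a b)
      have h2 : 0 ≤ ((Q^N) *ᵥ evec) a := by
        have h0 : ((Q^N) *ᵥ evec) a = ∑ b, (Q^N) a b * evec b := rfl
        rw [h0]
        apply Finset.sum_nonneg
        intro b _
        apply mul_nonneg (pow_entry_nonneg' Q hQnn N a b)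
        rw [hevec]
        dsimp only
        by_cases hb : (b:ℕ) < M'
        · rw [if_pos hb]; norm_num
        · rw [if_neg hb]
      have h3 : evec a ≤ 1 := by
        rw [hevec]
        dsimp only
        by_cases hb : (a:ℕ) < M'
        · rw [if_pos hb]
        · rw [if_neg hb]; norm_num
      calc ∑ n ∈ Finset.range N, ((Q^n) *ᵥ gvec) a
          ≤ ∑ n ∈ Finset.range N, ((Q^n) *ᵥ fvec) a := Finset.sum_le_sum fun n _ => h1 n
        _ = evec a - ((Q^N) *ᵥ evec) a := hpartf N a
        _ ≤ 1 := by linarith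
    have hsumm : ∀ a, Summable (fun n : ℕ => ((Q^n) *ᵥ gvec) a) := fun a =>
      summable_of_sum_range_le (fun n => hvnn n a) (fun N => hpart N a)
    set u : Fin M → ℝ := fun a => ∑' n : ℕ, ((Q^n) *ᵥ gvec) a with hud
    have hu0 : ∀ a, 0 ≤ u a := fun a => tsum_nonneg (fun n => hvnn n a)
    have hu1 : ∀ a, u a ≤ 1 := fun a =>
      Real.tsum_le_of_sum_range_le (fun n => hvnn n a) (fun N => hpart N a)
    have hueq : ∀ a, u a = (Q *ᵥ u) a + gvec a := by
      intro a
      have h0 := Summable.tsum_eq_zero_add (hsumm a)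
      have h1 : ((Q^0) *ᵥ gvec) a = gvec a := by rw [pow_zero, Matrix.one_mulVec]
      have h2 : ∀ n:ℕ, ((Q^(n+1)) *ᵥ gvec) a = ∑ b, Q a b * ((Q^n) *ᵥ gvec) b := by
        intro n
        rw [pow_succ', ← Matrix.mulVec_mulVec]
        rfl
      have h3 : ∑' n:ℕ, ((Q^(n+1)) *ᵥ gvec) a = (Q *ᵥ u) a := by
        rw [tsum_congr h2]
        rw [Summable.tsum_finsetSum (fun b _ => ((hsumm b).mul_left (Q a b)))]
        have h4 : ∀ b, ∑' n:ℕ, Q a b * ((Q^n) *ᵥ gvec) b = Q a b * u b := fun b =>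
          tsum_mul_left
        rw [Finset.sum_congr rfl (fun b _ => h4 b)]
        rfl
      have h5 : u a = ∑' n : ℕ, ((Q^n) *ᵥ gvec) a := rfl
      rw [h5, h0, h1, h3, add_comm]
    -- lower bound on the averaged matrix entries
    have hSle : ∀ a b : Fin M, (a:ℕ) < M' → (b:ℕ) < M' →
        c0/2 ≤ (∑ n ∈ Finset.range m, Q ^ n) a b := by
      intro a b ha hb
      have hdiff : |(∑ n ∈ Finset.range m, Q ^ n) a b - S0 a b| ≤ c0/2 := by
        have h1 : (∑ n ∈ Finset.range m, Q ^ n) a b - S0 a b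
            = ∑ n ∈ Finset.range m, ((Q^n) a b - (B^n) a b) := by
          rw [hS0, Matrix.sum_apply, Matrix.sum_apply, ← Finset.sum_sub_distrib]
        rw [h1]
        have hMne : ((M:ℝ)) ≠ 0 := by positivity
        have hmne : ((m:ℝ)) ≠ 0 := ne_of_gt hm0
        calc |∑ n ∈ Finset.range m, ((Q^n) a b - (B^n) a b)|
            ≤ ∑ n ∈ Finset.range m, |(Q^n) a b - (B^n) a b| := Finset.abs_sum_le_sum_abs _ _
          _ ≤ ∑ _n ∈ Finset.range m, (m:ℝ) * M * γ₀ := by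
              apply Finset.sum_le_sum
              intro n hn
              have h2 := pow_entry_close' Q B hQnn hQrow hBnn hBrow hγ₀pos.le hQB n a b
              have h3 : (n:ℝ) ≤ (m:ℝ) := by
                exact_mod_cast le_of_lt (Finset.mem_range.1 hn)
              have h4 : (n:ℝ) * M * γ₀ ≤ (m:ℝ) * M * γ₀ := by
                apply mul_le_mul_of_nonneg_right _ hγ₀pos.le
                exact mul_le_mul_of_nonneg_right h3 (by positivity)
              linarith
          _ = (m:ℝ) * ((m:ℝ) * M * γ₀) := by
              rw [Finset.sum_const, Finset.card_range, nsmul_eq_mul]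
          _ = c0/2 := by
              rw [hγ₀def]
              field_simp
      have h5 := hc0le a b ha hb
      have h6 := (abs_le.1 hdiff).1
      linarith
    -- identification of AF, AG, γv with the core quantities
    have hafeq : AF ε = ∑ j ∈ E, lam j * fvec j := by
      show ∑ k ∈ Fs, ∑ j ∈ E, lam j * Pe j k ε = _
      rw [Finset.sum_comm]
      apply Finset.sum_congr rfl
      intro j hj
      rw [← Finset.mul_sum]
      congr 1
      rw [hfd]
      dsimp only
      rw [if_pos ((hEmem j).1 hj)]
    have hageq : AG ε = ∑ j ∈ E, lam j * gvec j := by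
      show ∑ k ∈ G, ∑ j ∈ E, lam j * Pe j k ε = _
      rw [Finset.sum_comm]
      apply Finset.sum_congr rfl
      intro j hj
      rw [← Finset.mul_sum]
      congr 1
      rw [hgd]
      dsimp only
      rw [if_pos ((hEmem j).1 hj)]
    have hγeq : γv ε = ∑ c ∈ E, |(∑ b ∈ E, lam b * Q b c) - lam c| := by
      show ∑ cc ∈ E, |(∑ b ∈ E, lam b * Pe b cc ε) - lam cc| = _
      apply Finset.sum_congr rfl
      intro cc hcc
      congr 2
      apply Finset.sum_congr rfl
      intro b hb
      congr 1
      rw [hQd]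
      simp [Matrix.of_apply, (hEmem b).1 hb, (hEmem cc).1 hcc]
    have hag0' : 0 < AG ε := hGpos ε hε0
    have happ := core_est' Q lam u gvec fvec lmin c0 (AF ε) (AG ε) (γv ε) m i hi
      hQnn hQz hQrow hrowf hfz hgnn hgf hueq hu0 hu1 hlmin hlmin_le hlamnn
      hlamsum1 hafeq hageq hγeq hag0' hm hc0 hSle hγs
    have hfinal : (∑' n : ℕ, ((Q ^ n) *ᵥ gvec) i) / (AG ε / AF ε)
        = u i * AF ε / AG ε := by
      rw [div_div_eq_mul_div]
    rw [hfinal]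
    exact happ
  -- conclusion
  have hbnd : Tendsto (fun ε => K * (AF ε + γv ε)) (𝓝[>] (0:ℝ)) (𝓝 0) := by
    have h1 := (hAFtend.add hγtend).const_mul K
    simpa using h1
  have h2 : Tendsto (fun ε =>
      (∑' n : ℕ,
          (((Matrix.of fun a b : Fin M =>
              if (a:ℕ) < M' ∧ (b:ℕ) < M' then Pe a b ε else 0) ^ n) *ᵥ
            (fun a : Fin M => if (a:ℕ) < M' then ∑ k ∈ G, Pe a k ε else 0)) i) /
        (AG ε / AF ε) - 1) (𝓝[>] (0:ℝ)) (𝓝 0) := by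
    apply squeeze_zero_norm' _ hbnd
    filter_upwards [main] with ε h
    simpa [Real.norm_eq_abs] using h
  have h3 := h2.add (tendsto_const_nhds (x := (1:ℝ)))
  norm_num at h3
  convert h3 using 2 with ε
end
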